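/- Let 𝓑 be a unital C*-algebra, η : 𝓑 → 𝓑 a positive bounded linear map, b ∈ H⁺(𝓑), and r > ‖Im(b)⁻¹‖. Then for all w₁, w₂ ∈ D_r one has ‖h_b(w₂) − h_b(w₁)‖ ≤ r²·‖η‖·‖w₂ − w₁‖; that is, the restriction of h_b to D_r is Lipschitz continuous with constant r²‖η‖. -/

import Mathlib

/-- The imaginary part `Im(b) = (b − b*)/(2i)` of an element of a C*-algebra. -/
noncomputable def imPart {B : Type*} [CStarAlgebra B] (b : B) : B :=
  ((2 : ℂ) * Complex.I)⁻¹ • (b - star b)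

/-- The upper half-plane `H⁺(𝓑) = {b : ∃ ε > 0, Im(b) ≥ ε·1}`. -/
def upperHalfPlane (B : Type*) [CStarAlgebra B] [PartialOrder B] : Set B :=
  {b | ∃ ε : ℝ, 0 < ε ∧ (ε : ℂ) • (1 : B) ≤ imPart b}

/-- The lower half-plane `H⁻(𝓑) = {b : ∃ ε > 0, −Im(b) ≥ ε·1}`. -/
def lowerHalfPlane (B : Type*) [CStarAlgebra B] [PartialOrder B] : Set B :=
  {b | ∃ ε : ℝ, 0 < ε ∧ (ε : ℂ) • (1 : B) ≤ -imPart b}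

section Aux

variable {B : Type*} [CStarAlgebra B]

lemma twoI_ne : ((2 : ℂ) * Complex.I) ≠ 0 := by
  simp [Complex.I_ne_zero]

lemma star_twoI_inv : star (((2 : ℂ) * Complex.I)⁻¹) = -((2 : ℂ) * Complex.I)⁻¹ := by
  rw [Complex.star_def, map_inv₀]
  rw [show (starRingEnd ℂ) (2 * Complex.I) = -(2 * Complex.I) by simp [Complex.conj_I, map_ofNat]]
  rw [neg_inv]

lemma star_I : star Complex.I = -Complex.I := by
  simp [Complex.star_def, Complex.conj_I]

lemma imPart_isSelfAdjoint (a : B) : IsSelfAdjoint (imPart a) := by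
  rw [IsSelfAdjoint, imPart, star_smul, star_sub, star_star, star_twoI_inv, neg_smul,
    ← smul_neg, neg_sub]

lemma twoI_smul_imPart (a : B) : ((2 : ℂ) * Complex.I) • imPart a = a - star a := by
  rw [imPart, smul_smul, mul_inv_cancel₀ twoI_ne, one_smul]

lemma star_eq_sub_twoI (a : B) : star a = a - ((2 : ℂ) * Complex.I) • imPart a := by
  rw [twoI_smul_imPart]; abel

lemma isSelfAdjoint_sub_I_smul_imPart (a : B) :
    IsSelfAdjoint (a - Complex.I • imPart a) := by
  rw [IsSelfAdjoint, star_sub, star_smul, (imPart_isSelfAdjoint a).star_eq,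
    star_eq_sub_twoI a, star_I]
  module

lemma imPart_sub (u v : B) : imPart (u - v) = imPart u - imPart v := by
  rw [imPart, imPart, imPart, star_sub]
  module

lemma smul_one_nonneg [PartialOrder B] [StarOrderedRing B] {ε : ℝ} (hε : 0 ≤ ε) :
    (0 : B) ≤ (ε : ℂ) • (1 : B) := by
  rw [Complex.coe_smul]
  exact smul_nonneg hε zero_le_one

lemma smul_one_isUnit {ε : ℝ} (hε : 0 < ε) : IsUnit ((ε : ℂ) • (1 : B)) := by
  have h1 : ((ε : ℂ) • (1 : B)) * ((ε : ℂ)⁻¹ • (1 : B)) = 1 := by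
    rw [smul_mul_assoc, one_mul, smul_smul, mul_inv_cancel₀ (by exact_mod_cast hε.ne'), one_smul]
  have h2 : ((ε : ℂ)⁻¹ • (1 : B)) * ((ε : ℂ) • (1 : B)) = 1 := by
    rw [smul_mul_assoc, one_mul, smul_smul, inv_mul_cancel₀ (by exact_mod_cast hε.ne'), one_smul]
  exact ⟨⟨_, _, h1, h2⟩, rfl⟩

end Aux

section Core

variable {B : Type*} [CStarAlgebra B] [PartialOrder B] [StarOrderedRing B]

lemma core_isUnit_norm {a : B} {ε : ℝ} (hε : 0 < ε) (h : (ε : ℂ) • (1 : B) ≤ imPart a) :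
    IsUnit a ∧ ‖Ring.inverse a‖ ≤ ε⁻¹ := by
  set y := imPart a with hy_def
  set x := a - Complex.I • y with hx_def
  have hy : IsSelfAdjoint y := imPart_isSelfAdjoint a
  have hx : IsSelfAdjoint x := isSelfAdjoint_sub_I_smul_imPart a
  have hε1 : (0 : B) ≤ (ε : ℂ) • (1 : B) := smul_one_nonneg hε.le
  have hy0 : (0 : B) ≤ y := hε1.trans h
  have hεu : IsUnit ((ε : ℂ) • (1 : B)) := smul_one_isUnit hε
  have hyu : IsUnit y := CStarAlgebra.isUnit_of_le _ h (hεu.isStrictlyPositive hε1)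
  set Y := hyu.unit with hY_def
  have hYc : (Y : B) = y := hyu.unit_spec
  set yi : B := ↑Y⁻¹ with hyi_def
  have hyiy : yi * y = 1 := by rw [hyi_def, ← hYc]; exact Y.inv_mul
  have hyyi : y * yi = 1 := by rw [hyi_def, ← hYc]; exact Y.mul_inv
  have hyi0 : (0 : B) ≤ yi := CFC.inv_nonneg_of_nonneg Y (by rwa [hYc])
  have hyisa : IsSelfAdjoint yi := .of_nonneg hyi0
  -- norm bound on yi
  have h1 : (ε : ℂ) • (yi * yi) ≤ yi := by
    have hc := star_left_conjugate_le_conjugate h yi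
    rw [hyisa.star_eq] at hc
    calc (ε : ℂ) • (yi * yi) = yi * ((ε : ℂ) • (1 : B)) * yi := by
          rw [mul_smul_comm, mul_one, smul_mul_assoc]
      _ ≤ yi * y * yi := hc
      _ = yi := by rw [hyiy, one_mul]
  have hyin : ‖yi‖ ≤ ε⁻¹ := by
    have hyi2 : (0 : B) ≤ yi * yi := by
      simpa [hyisa.star_eq] using star_mul_self_nonneg yi
    have h2 : (0 : B) ≤ (ε : ℂ) • (yi * yi) := by
      rw [Complex.coe_smul]; exact smul_nonneg hε.le hyi2
    have h3 := CStarAlgebra.norm_le_norm_of_nonneg_of_le h2 h1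
    rw [Complex.coe_smul, norm_smul, Real.norm_eq_abs, abs_of_pos hε] at h3
    have h4 : ‖yi * yi‖ = ‖yi‖ * ‖yi‖ := by
      nth_rw 1 [← hyisa.star_eq]
      exact CStarRing.norm_star_mul_self
    rw [h4, ← mul_assoc] at h3
    rcases (norm_nonneg yi).eq_or_lt with h5 | h5
    · rw [← h5]; exact inv_nonneg.mpr hε.le
    · have h6 : ε * ‖yi‖ ≤ 1 := le_of_mul_le_mul_right (by rw [one_mul]; exact h3) h5
      exact (mul_le_mul_iff_right₀ hε).mp (by rw [mul_inv_cancel₀ hε.ne']; exact h6)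
  -- the decomposition a = x + I • y
  have ha : a = x + Complex.I • y := by rw [hx_def]; abel
  have hastar : star a = x - Complex.I • y := by
    rw [ha, star_add, star_smul, hx.star_eq, hy.star_eq, star_I]
    module
  clear_value yi
  clear hyi_def hY_def
  clear_value x y
  -- the key quantity m
  set m : B := x * yi * x + y with hm_def
  have hxyx : (0 : B) ≤ x * yi * x := by
    have := star_right_conjugate_nonneg hyi0 x
    rwa [hx.star_eq] at this
  have hym : y ≤ m := le_add_of_nonneg_left hxyx
  have hεm : (ε : ℂ) • (1 : B) ≤ m := h.trans hym
  have hmu : IsUnit m := CStarAlgebra.isUnit_of_le _ hεm (hεu.isStrictlyPositive hε1)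
  set M := hmu.unit with hM_def
  have hMc : (M : B) = m := hmu.unit_spec
  set mi : B := ↑M⁻¹ with hmi_def
  have hmim : mi * m = 1 := by rw [hmi_def, ← hMc]; exact M.inv_mul
  have hmmi : m * mi = 1 := by rw [hmi_def, ← hMc]; exact M.mul_inv
  clear_value mi
  clear hmi_def hM_def
  clear_value m
  -- key algebraic identities
  have hyyi' : ∀ c : B, y * (yi * c) = c := fun c => by rw [← mul_assoc, hyyi, one_mul]
  have hyiy' : ∀ c : B, yi * (y * c) = c := fun c => by rw [← mul_assoc, hyiy, one_mul]
  have key1 : a * (yi * star a) = m := by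
    rw [hastar, ha, hm_def]
    simp only [mul_sub, sub_mul, mul_add, add_mul, smul_mul_assoc, mul_smul_comm,
      smul_smul, mul_assoc, hyiy, hyyi, hyyi', hyiy', mul_one, one_mul,
      Complex.I_mul_I, neg_one_smul, smul_sub, smul_add, smul_neg, neg_smul, one_smul]
    abel
  have key2 : (star a * yi) * a = m := by
    rw [hastar, ha, hm_def]
    simp only [mul_sub, sub_mul, mul_add, add_mul, smul_mul_assoc, mul_smul_comm,
      smul_smul, mul_assoc, hyiy, hyyi, hyyi', hyiy', mul_one, one_mul,
      Complex.I_mul_I, neg_one_smul, smul_sub, smul_add, smul_neg, neg_smul, one_smul]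
    abel
  -- a is a unit with inverse w
  set w : B := yi * star a * mi with hw_def
  clear_value w
  have haw : a * w = 1 := by
    rw [hw_def, ← mul_assoc, ← mul_assoc, mul_assoc a yi (star a), key1, hmmi]
  set v : B := mi * (star a * yi) with hv_def
  clear_value v
  have hva : v * a = 1 := by
    rw [hv_def, mul_assoc, key2, hmim]
  have hvw : v = w := left_inv_eq_right_inv hva haw
  have hwa : w * a = 1 := by rw [← hvw]; exact hva
  have hau : IsUnit a := ⟨⟨a, w, haw, hwa⟩, rfl⟩
  refine ⟨hau, ?_⟩
  have hinv : Ring.inverse a = w := by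
    have : Ring.inverse ((⟨a, w, haw, hwa⟩ : Bˣ) : B) = w := Ring.inverse_unit _
    exact this
  rw [hinv]
  -- norm bound on w
  have hwstar : star w * star a = 1 := by rw [← star_mul, haw, star_one]
  have hastarw : star a * star w = 1 := by rw [← star_mul, hwa, star_one]
  have q2 : w * m * star w = yi := by
    calc w * m * star w = w * (a * (yi * star a)) * star w := by rw [key1]
      _ = (w * a) * (yi * (star a * star w)) := by simp only [mul_assoc]
      _ = yi := by rw [hwa, hastarw, mul_one, one_mul]
  have q1 : w * y * star w ≤ w * m * star w := by
    simpa [star_star] using star_left_conjugate_le_conjugate hym (star w)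
  have q3 : (ε : ℂ) • (w * star w) ≤ w * y * star w := by
    have := star_left_conjugate_le_conjugate h (star w)
    rw [star_star] at this
    calc (ε : ℂ) • (w * star w) = w * ((ε : ℂ) • (1 : B)) * star w := by
          rw [mul_smul_comm, mul_one, smul_mul_assoc]
      _ ≤ w * y * star w := this
  have q4 : (ε : ℂ) • (w * star w) ≤ yi := by
    calc (ε : ℂ) • (w * star w) ≤ w * y * star w := q3
      _ ≤ w * m * star w := q1
      _ = yi := q2
  have q5 : (0 : B) ≤ (ε : ℂ) • (w * star w) := by
    rw [Complex.coe_smul]; exact smul_nonneg hε.le (mul_star_self_nonneg w)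
  have q6 := CStarAlgebra.norm_le_norm_of_nonneg_of_le q5 q4
  rw [Complex.coe_smul, norm_smul, Real.norm_eq_abs, abs_of_pos hε,
    CStarRing.norm_self_mul_star] at q6
  have q7 : ‖w‖ * ‖w‖ ≤ ε⁻¹ * ε⁻¹ := by
    have q8 : ε * (‖w‖ * ‖w‖) ≤ ε * (ε⁻¹ * ε⁻¹) := by
      have h9 : ε * (ε⁻¹ * ε⁻¹) = ε⁻¹ := by field_simp
      rw [h9]; exact q6.trans hyin
    exact le_of_mul_le_mul_left q8 hε
  nlinarith [q7, norm_nonneg w, inv_nonneg.mpr hε.le]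

end Core

section Map

variable {B : Type*} [CStarAlgebra B] [PartialOrder B] [StarOrderedRing B]

lemma map_selfAdjoint (η : B →L[ℂ] B) (hη : ∀ x : B, 0 ≤ x → 0 ≤ η x)
    {s : B} (hs : IsSelfAdjoint s) : IsSelfAdjoint (η s) := by
  nth_rw 1 [← CFC.posPart_sub_negPart s hs]
  rw [map_sub]
  exact (IsSelfAdjoint.of_nonneg (hη _ (CFC.posPart_nonneg s))).sub
    (IsSelfAdjoint.of_nonneg (hη _ (CFC.negPart_nonneg s)))

lemma map_star_comm (η : B →L[ℂ] B) (hη : ∀ x : B, 0 ≤ x → 0 ≤ η x) (v : B) :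
    star (η v) = η (star v) := by
  have hs : IsSelfAdjoint (v + star v) := by
    rw [IsSelfAdjoint, star_add, star_star, add_comm]
  have ht : IsSelfAdjoint (Complex.I • (v - star v)) := by
    rw [IsSelfAdjoint, star_smul, star_I, star_sub, star_star, neg_smul, ← smul_neg, neg_sub]
  have hes := map_selfAdjoint η hη hs
  have het := map_selfAdjoint η hη ht
  have hv : v = (2:ℂ)⁻¹ • ((v + star v) - Complex.I • (Complex.I • (v - star v))) := by
    rw [smul_smul, Complex.I_mul_I, neg_one_smul]
    module
  have hvs : star v = (2:ℂ)⁻¹ • ((v + star v) + Complex.I • (Complex.I • (v - star v))) := by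
    rw [smul_smul, Complex.I_mul_I, neg_one_smul]
    module
  have h2 : star ((2:ℂ)⁻¹) = (2:ℂ)⁻¹ := by
    simp [Complex.star_def, map_inv₀, map_ofNat]
  calc star (η v)
      = star (η ((2:ℂ)⁻¹ • ((v + star v) - Complex.I • (Complex.I • (v - star v))))) := by
        rw [← hv]
    _ = (2:ℂ)⁻¹ • (star (η (v + star v)) - star (Complex.I • η (Complex.I • (v - star v)))) := by
        rw [map_smul, map_sub, map_smul, star_smul, star_sub, h2]
    _ = (2:ℂ)⁻¹ • (η (v + star v) + Complex.I • η (Complex.I • (v - star v))) := by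
        rw [star_smul, star_I, hes.star_eq, het.star_eq, neg_smul, sub_neg_eq_add]
    _ = η ((2:ℂ)⁻¹ • ((v + star v) + Complex.I • (Complex.I • (v - star v)))) := by
        simp only [map_smul, map_add, map_sub]
    _ = η (star v) := by rw [← hvs]

lemma imPart_map (η : B →L[ℂ] B) (hη : ∀ x : B, 0 ≤ x → 0 ≤ η x) (v : B) :
    imPart (η v) = η (imPart v) := by
  rw [imPart, imPart, map_star_comm η hη v, ← map_sub, ← map_smul]

end Map


/-- The map `h_b(w) = (b − η(w))⁻¹` is Lipschitz on
`D_r = {w ∈ H⁻(𝓑) : ‖w‖ < r}` with constant `r²‖η‖`, for `r > ‖Im(b)⁻¹‖`. -/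
theorem hb_lipschitz_on_Dr {B : Type*} [CStarAlgebra B]
    [PartialOrder B] [StarOrderedRing B]
    (η : B →L[ℂ] B) (hη : ∀ x : B, 0 ≤ x → 0 ≤ η x)
    (b : B) (hb : b ∈ upperHalfPlane B)
    (r : ℝ) (hr : ‖Ring.inverse (imPart b)‖ < r)
    (w₁ w₂ : B) (hw₁ : w₁ ∈ lowerHalfPlane B) (hw₁r : ‖w₁‖ < r)
    (hw₂ : w₂ ∈ lowerHalfPlane B) (hw₂r : ‖w₂‖ < r) :
    ‖Ring.inverse (b - η w₂) - Ring.inverse (b - η w₁)‖ ≤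
      r ^ 2 * ‖η‖ * ‖w₂ - w₁‖ := by
  obtain ⟨ε₀, hε₀, hb'⟩ := hb
  have hy := imPart_isSelfAdjoint b
  have hε1 : (0:B) ≤ (ε₀:ℂ) • 1 := smul_one_nonneg hε₀.le
  have hεu := smul_one_isUnit (B := B) hε₀
  have hyu : IsUnit (imPart b) := CStarAlgebra.isUnit_of_le _ hb' (hεu.isStrictlyPositive hε1)
  have hy0 : (0:B) ≤ imPart b := hε1.trans hb'
  have hr0 : 0 < r := lt_of_le_of_lt (norm_nonneg _) hr
  have hRinv : Ring.inverse (imPart b) = ((hyu.unit⁻¹ : Bˣ) : B) := by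
    conv_lhs => rw [← hyu.unit_spec]
    exact Ring.inverse_unit _
  set yi : B := ((hyu.unit⁻¹ : Bˣ) : B) with hyi_def
  have hyi0 : (0:B) ≤ yi :=
    CFC.inv_nonneg_of_nonneg hyu.unit (by rw [hyu.unit_spec]; exact hy0)
  have hyin : ‖yi‖ < r := by rw [hRinv] at hr; exact hr
  -- r⁻¹ • 1 ≤ imPart b
  have key0 : ((r⁻¹ : ℝ) : ℂ) • (1:B) ≤ imPart b := by
    have h1 : yi ≤ algebraMap ℝ B ‖yi‖ :=
      IsSelfAdjoint.le_algebraMap_norm_self (.of_nonneg hyi0)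
    have h2 : algebraMap ℝ B ‖yi‖ ≤ r • (1:B) := by
      rw [Algebra.algebraMap_eq_smul_one, ← sub_nonneg, ← sub_smul]
      exact smul_nonneg (by linarith) zero_le_one
    have h3 : yi ≤ r • (1:B) := h1.trans h2
    have hru : IsUnit ((r:ℝ) • (1:B)) := by
      rw [← Complex.coe_smul]; exact smul_one_isUnit hr0
    have h4 := CStarAlgebra.inv_le_inv (a := hyu.unit⁻¹) (b := hru.unit) hyi0
      (by rw [hru.unit_spec]; exact h3)
    rw [inv_inv] at h4
    have h5 : ((hru.unit⁻¹ : Bˣ) : B) = r⁻¹ • (1:B) := by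
      refine Units.inv_eq_of_mul_eq_one_right ?_
      rw [hru.unit_spec, smul_mul_assoc, one_mul, smul_smul, mul_inv_cancel₀ hr0.ne', one_smul]
    rw [Complex.coe_smul]
    calc r⁻¹ • (1:B) = ((hru.unit⁻¹ : Bˣ) : B) := h5.symm
      _ ≤ ((hyu.unit : Bˣ) : B) := h4
      _ = imPart b := hyu.unit_spec
  -- invertibility and norm bound uniformly on the lower half-plane
  have main : ∀ w : B, w ∈ lowerHalfPlane B →
      IsUnit (b - η w) ∧ ‖Ring.inverse (b - η w)‖ ≤ r := by
    intro w hw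
    obtain ⟨ε', hε', hw'⟩ := hw
    have him : imPart (b - η w) = imPart b - η (imPart w) := by
      rw [imPart_sub, imPart_map η hη]
    have hpos : (0:B) ≤ η (-imPart w) := hη _ ((smul_one_nonneg hε'.le).trans hw')
    have hge : imPart b ≤ imPart (b - η w) := by
      rw [him, sub_eq_add_neg, ← map_neg]
      exact le_add_of_nonneg_right hpos
    have hcore := core_isUnit_norm (a := b - η w) (ε := r⁻¹) (by positivity)
      (key0.trans hge)
    rwa [inv_inv] at hcore
  obtain ⟨hu₁, hn₁⟩ := main w₁ hw₁
  obtain ⟨hu₂, hn₂⟩ := main w₂ hw₂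
  set h₁ := Ring.inverse (b - η w₁) with hh₁
  set h₂ := Ring.inverse (b - η w₂) with hh₂
  have e₁ : (b - η w₁) * h₁ = 1 := Ring.mul_inverse_cancel _ hu₁
  have e₂ : h₂ * (b - η w₂) = 1 := Ring.inverse_mul_cancel _ hu₂
  have hid : h₂ - h₁ = h₂ * (η (w₂ - w₁)) * h₁ := by
    have hd : η (w₂ - w₁) = (b - η w₁) - (b - η w₂) := by rw [map_sub]; abel
    rw [hd, mul_sub, sub_mul, mul_assoc h₂ (b - η w₁) h₁, e₁, mul_one, e₂, one_mul]
  rw [hid]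
  have hηle := η.le_opNorm (w₂ - w₁)
  calc ‖h₂ * η (w₂ - w₁) * h₁‖
      ≤ ‖h₂ * η (w₂ - w₁)‖ * ‖h₁‖ := norm_mul_le _ _
    _ ≤ (‖h₂‖ * ‖η (w₂ - w₁)‖) * ‖h₁‖ := by
        have := norm_mul_le h₂ (η (w₂ - w₁))
        exact mul_le_mul_of_nonneg_right this (norm_nonneg _)
    _ ≤ (r * (‖η‖ * ‖w₂ - w₁‖)) * r :=
        mul_le_mul (mul_le_mul hn₂ hηle (norm_nonneg _) hr0.le) hn₁ (norm_nonneg _)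
          (by positivity)
    _ = r ^ 2 * ‖η‖ * ‖w₂ - w₁‖ := by ring
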